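/- Consider a market with n buyers where buyer i has a k_i-demand valuation, |M| = Σ_{i=1}^n k_i, and every optimal allocation allocates all items and gives each buyer i exactly k_i items. If a price vector p : M → ℝ≥0 satisfies that for every buyer i and every S ∈ D_p(v_i), the bundle S is legal for buyer i and the remaining items M∖S can be partitioned among the other buyers so that each of them receives a bundle legal for her, then p is an optimal dynamic pricing: for every buyer i and every S ∈ D_p(v_i) there is an optimal allocation in which buyer i receives exactly S. -/

import Mathlib

open Finset

section Defs

variable {M : Type*} [Fintype M] [DecidableEq M] {ι : Type*} [Fintype ι]

/-- A valuation is monotone. -/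
def MonotoneVal (v : Finset M → ℝ) : Prop :=
  ∀ ⦃S T : Finset M⦄, S ⊆ T → v S ≤ v T

/-- Quasi-linear utility of a bundle `S` at prices `p`. -/
def util (v : Finset M → ℝ) (p : M → ℝ) (S : Finset M) : ℝ :=
  v S - ∑ x ∈ S, p x

/-- `S` is a utility-maximizing bundle for valuation `v` at prices `p`. -/
def InDemand (v : Finset M → ℝ) (p : M → ℝ) (S : Finset M) : Prop :=
  ∀ T : Finset M, util v p T ≤ util v p S

/-- Gross-substitutes valuation. -/
def GrossSubstitutes (v : Finset M → ℝ) : Prop :=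
  ∀ p q : M → ℝ, (∀ x, 0 ≤ p x) → (∀ x, 0 ≤ q x) → (∀ x, p x ≤ q x) →
    ∀ A : Finset M, InDemand v p A →
      ∃ B : Finset M, InDemand v q B ∧ ∀ x ∈ A, p x = q x → x ∈ B

/-- `v` is a `k`-demand (multi-demand) valuation:
`v S` is the maximum of `∑_{x ∈ T} v {x}` over `T ⊆ S` with `|T| ≤ k`. -/
def MultiDemand (v : Finset M → ℝ) (k : ℕ) : Prop :=
  ∀ S : Finset M,
    IsGreatest {t : ℝ | ∃ T ⊆ S, T.card ≤ k ∧ t = ∑ x ∈ T, v {x}} (v S)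

/-- `v` is a unit-demand valuation: `v ∅ = 0` and `v S = max_{x ∈ S} v {x}`. -/
def UnitDemand (v : Finset M → ℝ) : Prop :=
  v ∅ = 0 ∧ ∀ S : Finset M, S.Nonempty →
    IsGreatest {t : ℝ | ∃ x ∈ S, t = v {x}} (v S)

/-- An allocation: a family of pairwise disjoint bundles. -/
def IsAlloc (A : ι → Finset M) : Prop :=
  ∀ i j : ι, i ≠ j → Disjoint (A i) (A j)

/-- Social welfare of an allocation. -/
def SW (v : ι → Finset M → ℝ) (A : ι → Finset M) : ℝ :=
  ∑ i, v i (A i)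

/-- An optimal allocation: it maximizes social welfare among allocations. -/
def IsOptimalAlloc (v : ι → Finset M → ℝ) (A : ι → Finset M) : Prop :=
  IsAlloc A ∧ ∀ B : ι → Finset M, IsAlloc B → SW v B ≤ SW v A

/-- `p` is an optimal dynamic pricing: every demanded bundle of every buyer is
her bundle in some optimal allocation. -/
def IsDynamicPricing (v : ι → Finset M → ℝ) (p : M → ℝ) : Prop :=
  (∀ x, 0 ≤ p x) ∧
  ∀ (i : ι) (S : Finset M), InDemand (v i) p S →
    ∃ A : ι → Finset M, IsOptimalAlloc v A ∧ A i = S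

/-- Walrasian equilibrium: every buyer gets a demanded bundle and unallocated
items have price 0. -/
def IsWalrasianEq (v : ι → Finset M → ℝ) (A : ι → Finset M) (p : M → ℝ) : Prop :=
  (∀ x, 0 ≤ p x) ∧ IsAlloc A ∧ (∀ i, InDemand (v i) p (A i)) ∧
  ∀ x : M, (∀ i, x ∉ A i) → p x = 0

/-- Item `x` is legal for buyer `i`: some optimal allocation gives `x` to `i`. -/
def LegalItem (v : ι → Finset M → ℝ) (i : ι) (x : M) : Prop :=
  ∃ A : ι → Finset M, IsOptimalAlloc v A ∧ x ∈ A i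

/-- A bundle `S` is legal for buyer `i`: `|S| = k i` and every item of `S` is legal for `i`. -/
def LegalBundle (v : ι → Finset M → ℝ) (k : ι → ℕ) (i : ι) (S : Finset M) : Prop :=
  S.card = k i ∧ ∀ x ∈ S, LegalItem v i x

/-- A legal allocation: every buyer's bundle is legal for her. -/
def LegalAlloc (v : ι → Finset M → ℝ) (k : ι → ℕ) (A : ι → Finset M) : Prop :=
  IsAlloc A ∧ ∀ i, LegalBundle v k i (A i)

/-- Submodularity condition (SM). -/
def SMcond (v : Finset M → ℝ) : Prop :=
  ∀ (x y : M) (S : Finset M), x ≠ y → x ∉ S → y ∉ S →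
    v S + v (S ∪ {x, y}) ≤ v (S ∪ {x}) + v (S ∪ {y})

/-- Condition (RGP). -/
def RGPcond (v : Finset M → ℝ) : Prop :=
  ∀ (x y z : M) (S : Finset M), x ≠ y → x ≠ z → y ≠ z → x ∉ S → y ∉ S → z ∉ S →
    v (S ∪ {x}) + v (S ∪ {y, z}) ≤
      max (v (S ∪ {y}) + v (S ∪ {x, z})) (v (S ∪ {z}) + v (S ∪ {x, y}))

/-- Condition (NP-SM) with nonnegative prices. -/
def NPSM (v : Finset M → ℝ) : Prop :=
  ¬ ∃ (p : M → ℝ) (x y : M) (S : Finset M),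
      (∀ a, 0 ≤ p a) ∧ x ≠ y ∧ x ∉ S ∧ y ∉ S ∧ 0 < p x ∧ 0 < p y ∧
      InDemand v p S ∧ InDemand v p (S ∪ {x, y}) ∧
      ∀ C : Finset M, InDemand v p C → (C ⊆ S ∨ ∃ T ⊆ S, C = T ∪ {x, y})

/-- Condition (NP-RGP) with nonnegative prices. -/
def NPRGP (v : Finset M → ℝ) : Prop :=
  ¬ ∃ (p : M → ℝ) (x y z : M) (S : Finset M),
      (∀ a, 0 ≤ p a) ∧ x ≠ y ∧ x ≠ z ∧ y ≠ z ∧ x ∉ S ∧ y ∉ S ∧ z ∉ S ∧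
      0 < p x ∧ 0 < p y ∧ 0 < p z ∧
      InDemand v p (S ∪ {x}) ∧ InDemand v p (S ∪ {y, z}) ∧
      ∀ C : Finset M, InDemand v p C →
        ((∃ T ⊆ S, C = T ∪ {x}) ∨ ∃ T ⊆ S, C = T ∪ {y, z})

end Defs

set_option linter.unusedSectionVars false

namespace DPaux

open Finset

section BF

variable {M : Type*} [Fintype M] [DecidableEq M] {n : ℕ}

/-- number of items assigned to buyer `j` -/
def fibc (σ : M → Fin n) (j : Fin n) : ℕ := (Finset.univ.filter fun x => σ x = j).card

/-- value of an assignment -/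
def aval (w : Fin n → M → ℝ) (σ : M → Fin n) : ℝ := ∑ x, w (σ x) x

/-- gain of a walk (listed from last step to first) ending at buyer `j` -/
def wg (w : Fin n → M → ℝ) (τ : M → Fin n) : Fin n → List M → ℝ
  | _, [] => 0
  | j, x :: L => (w j x - w (τ x) x) + wg w τ (τ x) L

/-- start buyer of a walk ending at `j` -/
def ws (τ : M → Fin n) : Fin n → List M → Fin n
  | j, [] => j
  | _, x :: L => ws τ (τ x) L

variable (w : Fin n → M → ℝ) (τ : M → Fin n)

lemma wg_append (j : Fin n) (L1 L2 : List M) :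
    wg w τ j (L1 ++ L2) = wg w τ j L1 + wg w τ (ws τ j L1) L2 := by
  induction L1 generalizing j with
  | nil => simp [wg, ws]
  | cons x L ih => simp [wg, ws, ih, add_assoc]

lemma ws_append (j : Fin n) (L1 L2 : List M) :
    ws τ j (L1 ++ L2) = ws τ (ws τ j L1) L2 := by
  induction L1 generalizing j with
  | nil => rfl
  | cons x L ih => simp [ws, ih]

lemma ws_single (j : Fin n) (x : M) : ws τ j [x] = τ x := rfl

lemma fibc_update (σ : M → Fin n) (x : M) (j j' : Fin n) :
    fibc (Function.update σ x j) j' + (if σ x = j' then 1 else 0)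
      = fibc σ j' + (if j = j' then 1 else 0) := by
  classical
  have h1 : (fun y => if Function.update σ x j y = j' then 1 else 0)
      = Function.update (fun y => if σ y = j' then (1:ℕ) else 0) x (if j = j' then 1 else 0) := by
    funext y
    by_cases hy : y = x
    · subst hy; simp
    · simp [Function.update_of_ne hy]
  have h2 : fibc (Function.update σ x j) j' = ∑ y, if Function.update σ x j y = j' then 1 else 0 := by
    simp only [fibc, Finset.card_filter]
  have h3 : fibc σ j' = ∑ y, if σ y = j' then 1 else 0 := by
    simp only [fibc, Finset.card_filter]
  rw [h2, h3, h1, Finset.sum_update_of_mem (Finset.mem_univ x),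
    ← Finset.add_sum_erase _ _ (Finset.mem_univ x), Finset.sdiff_singleton_eq_erase]
  ring

lemma aval_update (σ : M → Fin n) (x : M) (j : Fin n) :
    aval w (Function.update σ x j) = aval w σ - w (σ x) x + w j x := by
  classical
  have h1 : (fun y => w (Function.update σ x j y) y)
      = Function.update (fun y => w (σ y) y) x (w j x) := by
    funext y
    by_cases hy : y = x
    · subst hy; simp
    · simp [Function.update_of_ne hy]
  have h2 : aval w (Function.update σ x j) = ∑ y, w (Function.update σ x j y) y := rfl
  rw [h2, h1, Finset.sum_update_of_mem (Finset.mem_univ x), Finset.sdiff_singleton_eq_erase]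
  have h3 : aval w σ = w (σ x) x + ∑ y ∈ Finset.univ.erase x, w (σ y) y :=
    (Finset.add_sum_erase _ _ (Finset.mem_univ x)).symm
  rw [h3]; ring

/-- Realization of a walk: a walk with `Nodup` items ending at `j` starting at `b`
can be realized by an assignment whose fibers agree with those of `τ` except +1 at `j`, -1 at `b`. -/
lemma walk_realize (L : List M) (j : Fin n) (hL : L.Nodup) :
    ∃ σ : M → Fin n, (∀ x ∉ L, σ x = τ x) ∧
      (∀ j', fibc σ j' + (if j' = ws τ j L then 1 else 0)
          = fibc τ j' + (if j' = j then 1 else 0)) ∧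
      aval w σ = aval w τ + wg w τ j L := by
  induction L generalizing j with
  | nil => exact ⟨τ, fun x _ => rfl, fun j' => by simp [ws]; congr, by simp [wg]⟩
  | cons x L' ih =>
    obtain ⟨hxL', hL'⟩ := List.nodup_cons.mp hL
    obtain ⟨σ', hoff, hfib, hval⟩ := ih (τ x) hL'
    have hσ'x : σ' x = τ x := hoff x hxL'
    refine ⟨Function.update σ' x j, ?_, ?_, ?_⟩
    · intro y hy
      have hyx : y ≠ x := fun h => hy (h ▸ List.mem_cons_self)
      have hyL' : y ∉ L' := fun h => hy (List.mem_cons_of_mem _ h)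
      rw [Function.update_of_ne hyx]; exact hoff y hyL'
    · intro j'
      have h1 := fibc_update σ' x j j'
      rw [hσ'x] at h1
      have h2 := hfib j'
      have hws : ws τ j (x :: L') = ws τ (τ x) L' := rfl
      rw [hws]
      -- h1 : fibc (update) j' + [τ x = j'] = fibc σ' j' + [j = j']
      -- h2 : fibc σ' j' + [j' = ws τ (τ x) L'] = fibc τ j' + [j' = τ x]
      have e1 : (if τ x = j' then (1:ℕ) else 0) = (if j' = τ x then 1 else 0) := by
        split_ifs with h h' h' <;> first | rfl | exact absurd h.symm h' | exact absurd h'.symm h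
      have e2 : (if j = j' then (1:ℕ) else 0) = (if j' = j then 1 else 0) := by
        split_ifs with h h' h' <;> first | rfl | exact absurd h.symm h' | exact absurd h'.symm h
      rw [e1, e2] at h1
      omega
    · rw [aval_update, hσ'x, hval]
      simp [wg]; ring


lemma ind_comm {α : Type*} [DecidableEq α] (a b : α) :
    (if a = b then (1:ℕ) else 0) = if b = a then 1 else 0 := by
  by_cases h : a = b
  · simp [h]
  · simp [h, Ne.symm h]

lemma not_nodup_split {α : Type*} {l : List α} (h : ¬ l.Nodup) :
    ∃ (a : α) (A B C : List α), l = A ++ a :: B ++ a :: C := by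
  induction l with
  | nil => exact absurd List.nodup_nil h
  | cons a l ih =>
    by_cases ha : a ∈ l
    · obtain ⟨B, C, rfl⟩ := List.append_of_mem ha
      exact ⟨a, [], B, C, rfl⟩
    · have hn : ¬ l.Nodup := fun hn => h (List.nodup_cons.mpr ⟨ha, hn⟩)
      obtain ⟨b, A, B, C, rfl⟩ := ih hn
      exact ⟨b, a :: A, B, C, rfl⟩

lemma not_nodup_map_split {α β : Type*} (f : α → β) {l : List α} (h : ¬ (l.map f).Nodup) :
    ∃ (x x' : α) (A B C : List α), l = A ++ x :: B ++ x' :: C ∧ f x = f x' := by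
  induction l with
  | nil => exact (h (by simp)).elim
  | cons a l ih =>
    by_cases ha : f a ∈ l.map f
    · obtain ⟨x', hx'l, hfx'⟩ := List.mem_map.mp ha
      obtain ⟨B, C, rfl⟩ := List.append_of_mem hx'l
      exact ⟨a, x', [], B, C, rfl, hfx'.symm⟩
    · have hn : ¬ (l.map f).Nodup := fun hn => h (by simpa using List.nodup_cons.mpr ⟨ha, hn⟩)
      obtain ⟨x, x', A, B, C, rfl, hxx⟩ := ih hn
      exact ⟨x, x', a :: A, B, C, rfl, hxx⟩

variable (hM : (Finset.univ : Finset M).Nonempty)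

noncomputable def best : ℕ → Fin n → ℝ
  | 0, _ => 0
  | t+1, j => max (best t j)
      (Finset.univ.sup' hM fun x => best t (τ x) + (w j x - w (τ x) x))

lemma best_succ_le (t : ℕ) (j : Fin n) : best w τ hM t j ≤ best w τ hM (t+1) j :=
  le_max_left _ _

lemma best_zero (j : Fin n) : best w τ hM 0 j = 0 := rfl

lemma best_succ (t : ℕ) (j : Fin n) : best w τ hM (t+1) j
    = max (best w τ hM t j)
      (Finset.univ.sup' hM fun x => best w τ hM t (τ x) + (w j x - w (τ x) x)) := rfl

lemma best_mono {s t : ℕ} (h : s ≤ t) (j : Fin n) : best w τ hM s j ≤ best w τ hM t j := by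
  induction h with
  | refl => exact le_rfl
  | step _ ih => exact le_trans ih (best_succ_le w τ hM _ j)

lemma best_nonneg (t : ℕ) (j : Fin n) : 0 ≤ best w τ hM t j :=
  best_mono w τ hM (Nat.zero_le t) j

lemma best_step (t : ℕ) (x : M) (j : Fin n) :
    best w τ hM t (τ x) + (w j x - w (τ x) x) ≤ best w τ hM (t+1) j := by
  rw [best_succ]
  exact le_trans (Finset.le_sup' (fun y => best w τ hM t (τ y) + (w j y - w (τ y) y))
    (Finset.mem_univ x)) (le_max_right _ _)

lemma wg_le_best : ∀ (L : List M) (j : Fin n), wg w τ j L ≤ best w τ hM L.length j := by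
  intro L
  induction L with
  | nil => intro j; exact le_of_eq (best_zero w τ hM j).symm
  | cons x L ih =>
    intro j
    have h1 : wg w τ j (x :: L) = (w j x - w (τ x) x) + wg w τ (τ x) L := rfl
    have h2 := ih (τ x)
    have h3 := best_step w τ hM L.length x j
    rw [h1]; simp only [List.length_cons]
    linarith

lemma exists_wg_eq_best : ∀ (t : ℕ) (j : Fin n), ∃ L : List M, wg w τ j L = best w τ hM t j := by
  intro t
  induction t with
  | zero => intro j; exact ⟨[], rfl⟩
  | succ t ih =>
    intro j
    rcases max_cases (best w τ hM t j)
      (Finset.univ.sup' hM fun x => best w τ hM t (τ x) + (w j x - w (τ x) x)) with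
      ⟨heq, _⟩ | ⟨heq, _⟩
    · obtain ⟨L, hL⟩ := ih j
      exact ⟨L, by rw [hL, best_succ, heq]⟩
    · obtain ⟨x, _, hx⟩ := Finset.exists_mem_eq_sup' hM
        (fun x => best w τ hM t (τ x) + (w j x - w (τ x) x))
      obtain ⟨L, hL⟩ := ih (τ x)
      refine ⟨x :: L, ?_⟩
      have h1 : wg w τ j (x :: L) = (w j x - w (τ x) x) + wg w τ (τ x) L := rfl
      rw [h1, hL, best_succ, heq, hx]
      ring

lemma closed_nonpos
    (hOpt : ∀ σ : M → Fin n, (∀ j, fibc σ j = fibc τ j) → aval w σ ≤ aval w τ) :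
    ∀ (N : ℕ) (L : List M) (j : Fin n), L.length ≤ N →
    ws τ j L = j → wg w τ j L ≤ 0 := by
  intro N
  induction N with
  | zero =>
    intro L j hlen _
    have : L = [] := List.length_eq_zero_iff.mp (Nat.le_zero.mp hlen)
    subst this; exact le_refl 0
  | succ N ih =>
    intro L j hlen hclosed
    by_cases hnd : L.Nodup
    · obtain ⟨σ, _, hfib, hval⟩ := walk_realize w τ L j hnd
      have hfib' : ∀ j', fibc σ j' = fibc τ j' := by
        intro j'
        have := hfib j'
        rw [hclosed] at this
        omega
      have := hOpt σ hfib'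
      linarith
    · obtain ⟨x, A, B, C, rfl⟩ := not_nodup_split hnd
      have hsplit : A ++ x :: B ++ x :: C = (A ++ [x]) ++ ((B ++ [x]) ++ C) := by simp
      have hws1 : ws τ j (A ++ [x]) = τ x := by rw [ws_append]; rfl
      have hws2 : ws τ (τ x) (B ++ [x]) = τ x := by rw [ws_append]; rfl
      have hwsL : ws τ (τ x) C = j := by
        have : ws τ j (A ++ x :: B ++ x :: C) = j := hclosed
        rw [hsplit, ws_append τ j (A ++ [x]) ((B ++ [x]) ++ C), hws1,
          ws_append τ (τ x) (B ++ [x]) C, hws2] at this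
        exact this
      have hdecomp : wg w τ j (A ++ x :: B ++ x :: C)
          = wg w τ j (A ++ [x]) + (wg w τ (τ x) (B ++ [x]) + wg w τ (τ x) C) := by
        rw [hsplit, wg_append w τ j (A ++ [x]) ((B ++ [x]) ++ C), hws1,
          wg_append w τ (τ x) (B ++ [x]) C, hws2]
      have hlenL : A.length + B.length + C.length + 2 ≤ N + 1 := by
        have := hlen; simp [List.length_append] at this; omega
      have hmid : wg w τ (τ x) (B ++ [x]) ≤ 0 := by
        refine ih (B ++ [x]) (τ x) ?_ hws2
        simp [List.length_append]; omega
      have hrest : wg w τ j ((A ++ [x]) ++ C) ≤ 0 := by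
        refine ih ((A ++ [x]) ++ C) j ?_ ?_
        · simp [List.length_append]; omega
        · rw [ws_append τ j (A ++ [x]) C, hws1]; exact hwsL
      have hrest' : wg w τ j ((A ++ [x]) ++ C) = wg w τ j (A ++ [x]) + wg w τ (τ x) C := by
        rw [wg_append w τ j (A ++ [x]) C, hws1]
      linarith

lemma shorten
    (hOpt : ∀ σ : M → Fin n, (∀ j, fibc σ j = fibc τ j) → aval w σ ≤ aval w τ) :
    ∀ (N : ℕ) (L : List M) (j : Fin n), L.length ≤ N →
    ∃ L' : List M, wg w τ j L ≤ wg w τ j L' ∧ ws τ j L' = ws τ j L ∧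
      (j :: L'.map τ).Nodup := by
  intro N
  induction N with
  | zero =>
    intro L j hlen
    have : L = [] := List.length_eq_zero_iff.mp (Nat.le_zero.mp hlen)
    subst this
    exact ⟨[], le_refl _, rfl, List.nodup_singleton j⟩
  | succ N ih =>
    intro L j hlen
    by_cases hnd : (j :: L.map τ).Nodup
    · exact ⟨L, le_refl _, rfl, hnd⟩
    by_cases hj : j ∈ L.map τ
    · obtain ⟨x, hxL, hτx⟩ := List.mem_map.mp hj
      obtain ⟨A, B, rfl⟩ := List.append_of_mem hxL
      have hsplit : A ++ x :: B = (A ++ [x]) ++ B := by simp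
      have hws1 : ws τ j (A ++ [x]) = τ x := by rw [ws_append]; rfl
      have hpre : wg w τ j (A ++ [x]) ≤ 0 :=
        closed_nonpos w τ hOpt (A ++ [x]).length (A ++ [x]) j le_rfl (by rw [hws1, hτx])
      have hdec : wg w τ j (A ++ x :: B) = wg w τ j (A ++ [x]) + wg w τ j B := by
        rw [hsplit, wg_append w τ j (A ++ [x]) B, hws1, hτx]
      have hwsB : ws τ j (A ++ x :: B) = ws τ j B := by
        rw [hsplit, ws_append τ j (A ++ [x]) B, hws1, hτx]
      obtain ⟨L', h1, h2, h3⟩ := ih B j (by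
        have := hlen; simp [List.length_append] at this ⊢; omega)
      exact ⟨L', by linarith, by rw [h2, hwsB], h3⟩
    · have hmap : ¬ (L.map τ).Nodup := fun h => hnd (List.nodup_cons.mpr ⟨hj, h⟩)
      obtain ⟨x, x', A, B, C, rfl, hxx⟩ := not_nodup_map_split τ hmap
      have hsplit : A ++ x :: B ++ x' :: C = (A ++ [x]) ++ ((B ++ [x']) ++ C) := by simp
      have hws1 : ws τ j (A ++ [x]) = τ x := by rw [ws_append]; rfl
      have hws2 : ws τ (τ x) (B ++ [x']) = τ x' := by rw [ws_append]; rfl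
      have hmid : wg w τ (τ x) (B ++ [x']) ≤ 0 :=
        closed_nonpos w τ hOpt (B ++ [x']).length (B ++ [x']) (τ x) le_rfl
          (by rw [hws2, hxx])
      have hdec : wg w τ j (A ++ x :: B ++ x' :: C)
          = wg w τ j (A ++ [x]) + (wg w τ (τ x) (B ++ [x']) + wg w τ (τ x') C) := by
        rw [hsplit, wg_append w τ j (A ++ [x]) ((B ++ [x']) ++ C), hws1,
          wg_append w τ (τ x) (B ++ [x']) C, hws2]
      have hdec' : wg w τ j ((A ++ [x]) ++ C)
          = wg w τ j (A ++ [x]) + wg w τ (τ x') C := by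
        rw [wg_append w τ j (A ++ [x]) C, hws1, hxx]
      have hwsL : ws τ j (A ++ x :: B ++ x' :: C) = ws τ j ((A ++ [x]) ++ C) := by
        rw [hsplit, ws_append τ j (A ++ [x]) ((B ++ [x']) ++ C), hws1,
          ws_append τ (τ x) (B ++ [x']) C, hws2, ws_append τ j (A ++ [x]) C, hws1, hxx]
      obtain ⟨L', h1, h2, h3⟩ := ih ((A ++ [x]) ++ C) j (by
        have := hlen; simp [List.length_append] at this ⊢; omega)
      exact ⟨L', by linarith, by rw [h2, hwsL], h3⟩


lemma visited_len {L : List M} {j : Fin n} (h : (j :: L.map τ).Nodup) :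
    L.length + 1 ≤ n := by
  have h2 := h.length_le_card
  simpa using h2

noncomputable def phi : Fin n → ℝ := best w τ hM (n-1)

lemma phi_nonneg (j : Fin n) : 0 ≤ phi w τ hM j := best_nonneg w τ hM _ j

lemma best_le_phi
    (hOpt : ∀ σ : M → Fin n, (∀ j, fibc σ j = fibc τ j) → aval w σ ≤ aval w τ)
    (t : ℕ) (j : Fin n) : best w τ hM t j ≤ phi w τ hM j := by
  obtain ⟨L, hL⟩ := exists_wg_eq_best w τ hM t j
  obtain ⟨L', h1, _, h3⟩ := shorten w τ hOpt L.length L j le_rfl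
  have h4 : wg w τ j L' ≤ best w τ hM L'.length j := wg_le_best w τ hM L' j
  have h5 : L'.length ≤ n - 1 := by have := visited_len τ h3; omega
  calc best w τ hM t j = wg w τ j L := hL.symm
    _ ≤ wg w τ j L' := h1
    _ ≤ best w τ hM L'.length j := h4
    _ ≤ phi w τ hM j := best_mono w τ hM h5 j

lemma phi_step
    (hOpt : ∀ σ : M → Fin n, (∀ j, fibc σ j = fibc τ j) → aval w σ ≤ aval w τ)
    (x : M) (j : Fin n) :
    phi w τ hM (τ x) + (w j x - w (τ x) x) ≤ phi w τ hM j :=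
  le_trans (best_step w τ hM (n-1) x j) (best_le_phi w τ hM hOpt ((n-1)+1) j)

lemma phi_le (hw : ∀ j x, 0 ≤ w j x)
    (hOpt : ∀ σ : M → Fin n, (∀ j, fibc σ j = fibc τ j) → aval w σ ≤ aval w τ)
    (x : M) : phi w τ hM (τ x) ≤ w (τ x) x := by
  obtain ⟨L, hL⟩ := exists_wg_eq_best w τ hM (n-1) (τ x)
  obtain ⟨L', h1, _, h3⟩ := shorten w τ hOpt L.length L (τ x) le_rfl
  have hup : wg w τ (τ x) L' ≤ phi w τ hM (τ x) := by
    have h4 : wg w τ (τ x) L' ≤ best w τ hM L'.length (τ x) := wg_le_best w τ hM L' (τ x)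
    have h5 : L'.length ≤ n - 1 := by have := visited_len τ h3; omega
    exact le_trans h4 (best_mono w τ hM h5 (τ x))
  have hlo : phi w τ hM (τ x) ≤ wg w τ (τ x) L' := by
    have : phi w τ hM (τ x) = wg w τ (τ x) L := hL.symm
    linarith
  have hxL' : x ∉ L' := fun hmem => (List.nodup_cons.mp h3).1 (List.mem_map_of_mem (f := τ) hmem)
  have hL'nd : L'.Nodup := List.Nodup.of_map τ (List.nodup_cons.mp h3).2
  obtain ⟨σ', hoff, hfib, hval⟩ := walk_realize w τ L' (τ x) hL'nd
  set b := ws τ (τ x) L' with hb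
  have hσ'x : σ' x = τ x := hoff x hxL'
  have hfibeq : ∀ j', fibc (Function.update σ' x b) j' = fibc τ j' := by
    intro j'
    have h1' := fibc_update σ' x b j'
    rw [hσ'x, ind_comm (τ x) j', ind_comm b j'] at h1'
    have h2' := hfib j'
    omega
  have hopt2 := hOpt _ hfibeq
  have hval2 := aval_update w σ' x b
  rw [hσ'x, hval] at hval2
  have hwb := hw b x
  linarith

end BF


section Market

variable {M : Type*} [Fintype M] [DecidableEq M] {n : ℕ}
variable (v : Fin n → Finset M → ℝ) (k : Fin n → ℕ)

lemma w_nonneg (hmono : ∀ i, MonotoneVal (v i)) (hnorm : ∀ i, v i ∅ = 0)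
    (j : Fin n) (x : M) : 0 ≤ v j {x} := by
  have := hmono j (Finset.empty_subset {x})
  rw [hnorm j] at this; exact this

lemma md_eq (hmono : ∀ i, MonotoneVal (v i)) (hnorm : ∀ i, v i ∅ = 0)
    (hmd : ∀ i, MultiDemand (v i) (k i)) {j : Fin n} {U : Finset M}
    (hU : U.card ≤ k j) : v j U = ∑ x ∈ U, v j {x} := by
  obtain ⟨T, hTU, _, hT⟩ := (hmd j U).1
  have hle : v j U ≤ ∑ x ∈ U, v j {x} := by
    rw [hT]
    exact Finset.sum_le_sum_of_subset_of_nonneg hTU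
      (fun x _ _ => w_nonneg v hmono hnorm j x)
  have hge : ∑ x ∈ U, v j {x} ≤ v j U :=
    (hmd j U).2 ⟨U, Finset.Subset.refl U, hU, rfl⟩
  linarith

lemma allocOf_isAlloc (σ : M → Fin n) :
    IsAlloc (fun j => Finset.univ.filter fun x => σ x = j) := by
  intro a b hab
  rw [Finset.disjoint_left]
  intro x hxa hxb
  exact hab (((Finset.mem_filter.mp hxa).2).symm.trans (Finset.mem_filter.mp hxb).2)

lemma SW_allocOf (hmono : ∀ i, MonotoneVal (v i)) (hnorm : ∀ i, v i ∅ = 0)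
    (hmd : ∀ i, MultiDemand (v i) (k i)) (σ : M → Fin n)
    (hσ : ∀ j, fibc σ j = k j) :
    SW v (fun j => Finset.univ.filter fun x => σ x = j)
      = aval (fun j x => v j {x}) σ := by
  have h1 : ∀ j : Fin n, v j (Finset.univ.filter fun x => σ x = j)
      = ∑ x ∈ Finset.univ.filter fun x => σ x = j, v (σ x) {x} := by
    intro j
    rw [md_eq v k hmono hnorm hmd (le_of_eq (hσ j))]
    exact Finset.sum_congr rfl fun x hx => by rw [(Finset.mem_filter.mp hx).2]
  calc SW v (fun j => Finset.univ.filter fun x => σ x = j)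
      = ∑ j, ∑ x ∈ Finset.univ.filter fun x => σ x = j, v (σ x) {x} :=
        Finset.sum_congr rfl fun j _ => h1 j
    _ = ∑ x, v (σ x) {x} := Finset.sum_fiberwise _ _ _

lemma exists_assign_of_cover (B : Fin n → Finset M) (hA : IsAlloc B)
    (hcov : ∀ x, ∃ j, x ∈ B j) :
    ∃ σ : M → Fin n, ∀ j, (Finset.univ.filter fun x => σ x = j) = B j := by
  choose f hf using hcov
  refine ⟨f, fun j => ?_⟩
  ext x
  simp only [Finset.mem_filter, Finset.mem_univ, true_and]
  constructor
  · rintro rfl; exact hf x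
  · intro hx
    by_contra hne
    exact (Finset.disjoint_left.mp (hA _ _ hne) (hf x)) hx

end Market

end DPaux


/-- If every demanded bundle of every buyer is legal for her and
the remaining items can be partitioned legally among the other buyers, then the
price vector is an optimal dynamic pricing. -/
theorem legal_demands_give_dynamic_pricing
    {M : Type*} [Fintype M] [DecidableEq M] {n : ℕ}
    (v : Fin n → Finset M → ℝ) (k : Fin n → ℕ)
    (hmono : ∀ i, MonotoneVal (v i)) (hnorm : ∀ i, v i ∅ = 0)
    (hmd : ∀ i, MultiDemand (v i) (k i))
    (hcard : Fintype.card M = ∑ i, k i)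
    (hopt : ∀ A : Fin n → Finset M, IsOptimalAlloc v A →
      (∀ x : M, ∃ i, x ∈ A i) ∧ ∀ i, (A i).card = k i)
    (p : M → ℝ) (hp : ∀ x, 0 ≤ p x)
    (hdem : ∀ (i : Fin n) (S : Finset M), InDemand (v i) p S →
      LegalBundle v k i S ∧
      ∃ B : Fin n → Finset M, B i = S ∧ IsAlloc B ∧
        (∀ j, j ≠ i → LegalBundle v k j (B j)) ∧ (∀ x : M, ∃ j, x ∈ B j)) :
    IsDynamicPricing v p := by
  classical
  by_cases hME : Nonempty M
  case neg =>
    have hempty : ∀ T : Finset M, T = ∅ :=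
      fun T => Finset.eq_empty_of_forall_notMem (fun x _ => hME ⟨x⟩)
    refine ⟨hp, fun i S _ => ⟨fun _ => ∅, ⟨fun a b _ => by simp, fun B _ => ?_⟩, (hempty S).symm⟩⟩
    exact le_of_eq (Finset.sum_congr rfl fun j _ => by rw [hempty (B j)])
  case pos =>
    refine ⟨hp, fun i S hS => ?_⟩
    obtain ⟨⟨hScard, hSleg⟩, B, hBi, hBalloc, hBleg, hBcov⟩ := hdem i S hS
    set w : Fin n → M → ℝ := fun j x => v j {x} with hw_def
    have hw : ∀ j x, 0 ≤ w j x := fun j x => DPaux.w_nonneg v hmono hnorm j x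
    have hM : (Finset.univ : Finset M).Nonempty := Finset.univ_nonempty
    obtain ⟨σB, hσB⟩ := DPaux.exists_assign_of_cover B hBalloc hBcov
    have hσBk : ∀ j, DPaux.fibc σB j = k j := by
      intro j
      rcases eq_or_ne j i with rfl | hne
      · rw [DPaux.fibc, hσB j, hBi]; exact hScard
      · rw [DPaux.fibc, hσB j]; exact (hBleg j hne).1
    -- an optimal assignment τ
    have hPholds : ∃ τ : M → Fin n, (∀ j, DPaux.fibc τ j = k j) ∧
        ∀ σ : M → Fin n, (∀ j, DPaux.fibc σ j = k j) → DPaux.aval w σ ≤ DPaux.aval w τ := by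
      obtain ⟨τ, hτmem, hτmax⟩ := Finset.exists_max_image
        (Finset.univ.filter fun σ : M → Fin n => ∀ j, DPaux.fibc σ j = k j)
        (DPaux.aval w)
        ⟨σB, Finset.mem_filter.mpr ⟨Finset.mem_univ _, hσBk⟩⟩
      exact ⟨τ, (Finset.mem_filter.mp hτmem).2,
        fun σ hσ => hτmax σ (Finset.mem_filter.mpr ⟨Finset.mem_univ _, hσ⟩)⟩
    obtain ⟨τ, hτP, hτmax⟩ := hPholds
    have hOpt : ∀ σ : M → Fin n, (∀ j', DPaux.fibc σ j' = DPaux.fibc τ j') →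
        DPaux.aval w σ ≤ DPaux.aval w τ :=
      fun σ h => hτmax σ (fun j => (h j).trans (hτP j))
    set φ : Fin n → ℝ := DPaux.phi w τ hM with hφ_def
    have hφstep : ∀ (x : M) (j : Fin n), φ (τ x) + (w j x - w (τ x) x) ≤ φ j :=
      fun x j => DPaux.phi_step w τ hM hOpt x j
    have hφnn : ∀ j, 0 ≤ φ j := fun j => DPaux.phi_nonneg w τ hM j
    have hφle : ∀ x, φ (τ x) ≤ w (τ x) x := fun x => DPaux.phi_le w τ hM hw hOpt x
    set q : M → ℝ := fun x => w (τ x) x - φ (τ x) with hq_def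
    have hqnn : ∀ x, 0 ≤ q x := fun x => by
      have := hφle x; simp only [hq_def]; linarith
    have hkey : ∀ (x : M) (j : Fin n), w j x ≤ q x + φ j := fun x j => by
      have := hφstep x j; simp only [hq_def]; linarith
    set D : ℝ := (∑ x, q x) + ∑ j, (k j : ℝ) * φ j with hD_def
    have hsum_comp : ∀ σ : M → Fin n, (∀ j, DPaux.fibc σ j = k j) →
        ∀ f : Fin n → ℝ, ∑ x, f (σ x) = ∑ j, (k j : ℝ) * f j := by
      intro σ hσ f
      rw [← Finset.sum_fiberwise Finset.univ σ (fun x => f (σ x))]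
      refine Finset.sum_congr rfl fun j _ => ?_
      have h1 : ∑ x ∈ Finset.univ.filter fun x => σ x = j, f (σ x)
          = ∑ x ∈ Finset.univ.filter fun x => σ x = j, f j :=
        Finset.sum_congr rfl fun x hx => by rw [(Finset.mem_filter.mp hx).2]
      rw [h1, Finset.sum_const, ← hσ j, DPaux.fibc, nsmul_eq_mul]
    have hτD : DPaux.aval w τ = D := by
      have h1 : DPaux.aval w τ = ∑ x, (q x + φ (τ x)) :=
        Finset.sum_congr rfl fun x _ => by simp only [hq_def]; ring
      rw [h1, Finset.sum_add_distrib, hsum_comp τ hτP φ, hD_def]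
    -- every legal item gives a tight edge
    have htight : ∀ (x : M) (j : Fin n), LegalItem v j x → w j x = q x + φ j := by
      rintro x j ⟨A, hAopt, hxA⟩
      obtain ⟨hAcov, hAcard⟩ := hopt A hAopt
      obtain ⟨σA, hσA⟩ := DPaux.exists_assign_of_cover A hAopt.1 hAcov
      have hσAk : ∀ j', DPaux.fibc σA j' = k j' := fun j' => by
        rw [DPaux.fibc, hσA]; exact hAcard j'
      have hσAx : σA x = j := by
        have hx : x ∈ Finset.univ.filter fun y => σA y = j := (hσA j).symm ▸ hxA
        exact (Finset.mem_filter.mp hx).2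
      have hAeq : A = fun j' => Finset.univ.filter fun x => σA x = j' :=
        funext fun j' => (hσA j').symm
      have hSWA : SW v A = DPaux.aval w σA := by
        rw [hAeq]; exact DPaux.SW_allocOf v k hmono hnorm hmd σA hσAk
      have hAτ : DPaux.aval w σA = DPaux.aval w τ := by
        refine le_antisymm (hτmax σA hσAk) ?_
        have h1 : SW v (fun j' => Finset.univ.filter fun x => τ x = j') = DPaux.aval w τ :=
          DPaux.SW_allocOf v k hmono hnorm hmd τ hτP
        have h2 := hAopt.2 _ (DPaux.allocOf_isAlloc τ)
        rw [h1] at h2; linarith [hSWA]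
      have hslack : ∀ y, 0 ≤ q y + φ (σA y) - w (σA y) y := fun y => by
        linarith [hkey y (σA y)]
      have hsum0 : ∑ y, (q y + φ (σA y) - w (σA y) y) = 0 := by
        have h3 : ∑ y, (q y + φ (σA y) - w (σA y) y)
            = (∑ y, q y) + (∑ y, φ (σA y)) - ∑ y, w (σA y) y := by
          rw [Finset.sum_sub_distrib, Finset.sum_add_distrib]
        rw [h3, hsum_comp σA hσAk φ]
        have h4 : ∑ y, w (σA y) y = DPaux.aval w σA := rfl
        rw [h4, hAτ, hτD, hD_def]; ring
      have h5 := (Finset.sum_eq_zero_iff_of_nonneg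
        (fun y _ => hslack y)).mp hsum0 x (Finset.mem_univ x)
      rw [hσAx] at h5; linarith
    -- every edge of σB is legal, hence tight
    have hσBleg : ∀ x, LegalItem v (σB x) x := by
      intro x
      have hxB : x ∈ B (σB x) := by
        have hx : x ∈ Finset.univ.filter fun y => σB y = σB x :=
          Finset.mem_filter.mpr ⟨Finset.mem_univ x, rfl⟩
        rw [hσB (σB x)] at hx; exact hx
      rcases eq_or_ne (σB x) i with he | hne
      · rw [he] at hxB ⊢
        rw [hBi] at hxB
        exact hSleg x hxB
      · exact (hBleg _ hne).2 x hxB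
    have hBval : DPaux.aval w σB = DPaux.aval w τ := by
      have h1 : DPaux.aval w σB = ∑ x, (q x + φ (σB x)) :=
        Finset.sum_congr rfl fun x _ => htight x (σB x) (hσBleg x)
      rw [h1, Finset.sum_add_distrib, hsum_comp σB hσBk φ, ← hD_def, ← hτD]
    -- conclusion
    refine ⟨fun j => Finset.univ.filter fun x => σB x = j,
      ⟨DPaux.allocOf_isAlloc σB, ?_⟩, (hσB i).trans hBi⟩
    intro B' hB'
    have hSWB : SW v (fun j => Finset.univ.filter fun x => σB x = j) = DPaux.aval w σB :=
      DPaux.SW_allocOf v k hmono hnorm hmd σB hσBk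
    have hG2 : SW v B' ≤ D := by
      have hex : ∀ j : Fin n, ∃ T, T ⊆ B' j ∧ T.card ≤ k j ∧ v j (B' j) = ∑ x ∈ T, v j {x} :=
        fun j => by
          obtain ⟨T, hT1, hT2, hT3⟩ := (hmd j (B' j)).1
          exact ⟨T, hT1, hT2, hT3⟩
      choose T hT1 hT2 hT3 using hex
      have hdisj : ((Finset.univ : Finset (Fin n)) : Set (Fin n)).PairwiseDisjoint T :=
        fun a _ b _ hab => Finset.disjoint_of_subset_left (hT1 a)
          (Finset.disjoint_of_subset_right (hT1 b) (hB' a b hab))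
      calc SW v B' = ∑ j, ∑ x ∈ T j, w j x := Finset.sum_congr rfl fun j _ => hT3 j
        _ ≤ ∑ j, ∑ x ∈ T j, (q x + φ j) :=
            Finset.sum_le_sum fun j _ => Finset.sum_le_sum fun x _ => hkey x j
        _ = ∑ j, ((∑ x ∈ T j, q x) + (T j).card * φ j) := by
            refine Finset.sum_congr rfl fun j _ => ?_
            rw [Finset.sum_add_distrib, Finset.sum_const, nsmul_eq_mul]
        _ ≤ (∑ x, q x) + ∑ j, (k j : ℝ) * φ j := by
            have hpart1 : ∑ j, ∑ x ∈ T j, q x ≤ ∑ x, q x := by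
              rw [← Finset.sum_biUnion hdisj]
              exact Finset.sum_le_sum_of_subset_of_nonneg (Finset.subset_univ _)
                (fun x _ _ => hqnn x)
            have hpart2 : ∑ j, ((T j).card : ℝ) * φ j ≤ ∑ j, (k j : ℝ) * φ j :=
              Finset.sum_le_sum fun j _ => mul_le_mul_of_nonneg_right
                (by exact_mod_cast hT2 j) (hφnn j)
            rw [Finset.sum_add_distrib]
            exact add_le_add hpart1 hpart2
        _ = D := hD_def.symm
    rw [hSWB, hBval, hτD]
    exact hG2
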